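/- arXiv:1206.4774 — 2 statements merged into one kernel-verified Lean document; each statement's English description precedes it below -/
import Mathlib

section
/- Let n ≥ 1, let W be the split orthogonal space of dimension 2n+1 over ℝ (its bilinear form has signature (n+1,n)), and let f ∈ ℝ[x] be a monic polynomial of degree 2n+1 with 2n+1 distinct roots, all of them real. Then the group SO(W)(ℝ), acting by conjugation T ↦ gTg⁻¹ on the set of self-adjoint endomorphisms T of W with characteristic polynomial f, has exactly binomial(2n+1, n) orbits. -/
open Polynomial

/-- The Gram matrix of the split orthogonal space of dimension `2n+1`, in the standard
basis `e₁, …, eₙ, u, fₙ, …, f₁`: it is the anti-diagonal matrix of `1`s (of signature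
`(n+1, n)` over `ℝ`). -/
def splitGram (k : Type*) [Field k] (n : ℕ) : Matrix (Fin (2 * n + 1)) (Fin (2 * n + 1)) k :=
  Matrix.of fun i j => if (i : ℕ) + (j : ℕ) = 2 * n then 1 else 0

/-- The symmetric bilinear form `⟨·,·⟩` of the split orthogonal space of dimension `2n+1`. -/
def splitBilin {k : Type*} [Field k] {n : ℕ} (v w : Fin (2 * n + 1) → k) : k :=
  dotProduct v ((splitGram k n).mulVec w)


section AuxSection
open Matrix

namespace SplitOrbitsAux

variable {ι : Type*} [Fintype ι] [DecidableEq ι]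

lemma matrix_ext_of_dot {M N : Matrix ι ι ℝ}
    (h : ∀ v w : ι → ℝ, v ⬝ᵥ M *ᵥ w = v ⬝ᵥ N *ᵥ w) : M = N := by
  ext i j
  have := h (Pi.single i 1) (Pi.single j 1)
  simpa [Matrix.mulVec_single, single_dotProduct] using this

lemma dot_mulVec_left (A M : Matrix ι ι ℝ) (v w : ι → ℝ) :
    (A *ᵥ v) ⬝ᵥ (M *ᵥ w) = v ⬝ᵥ ((Aᵀ * M) *ᵥ w) := by
  rw [Matrix.dotProduct_mulVec, ← Matrix.vecMul_transpose, Matrix.vecMul_vecMul,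
    ← Matrix.dotProduct_mulVec]

lemma dot_mulVec_right (A M : Matrix ι ι ℝ) (v w : ι → ℝ) :
    v ⬝ᵥ (M *ᵥ (A *ᵥ w)) = v ⬝ᵥ ((M * A) *ᵥ w) := by
  rw [Matrix.mulVec_mulVec]

/-- `sgn s i` is `1` if `i ∈ s` and `-1` otherwise. -/
def sgn (s : Finset ι) : ι → ℝ := fun i => if i ∈ s then 1 else -1

lemma sgn_apply_mem {s : Finset ι} {i : ι} (h : i ∈ s) : sgn s i = 1 := if_pos h
lemma sgn_apply_not_mem {s : Finset ι} {i : ι} (h : i ∉ s) : sgn s i = -1 := if_neg h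

/-- extension by zero as a linear map -/
def extZero (s : Finset ι) : (s → ℝ) →ₗ[ℝ] (ι → ℝ) where
  toFun c := fun i => if h : i ∈ s then c ⟨i, h⟩ else 0
  map_add' x y := by funext i; by_cases h : i ∈ s <;> simp [h]
  map_smul' t x := by funext i; by_cases h : i ∈ s <;> simp [h]

lemma extZero_apply_mem (s : Finset ι) (c : s → ℝ) {i : ι} (h : i ∈ s) :
    extZero s c i = c ⟨i, h⟩ := dif_pos h

lemma extZero_apply_not_mem (s : Finset ι) (c : s → ℝ) {i : ι} (h : i ∉ s) :
    extZero s c i = 0 := dif_neg h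

/-- One-sided Sylvester inequality. -/
lemma inertia_le (A : Matrix ι ι ℝ) (s₀ s₁ : Finset ι)
    (hA : Aᵀ * Matrix.diagonal (sgn s₀) * A = Matrix.diagonal (sgn s₁)) :
    s₁.card ≤ s₀.card := by
  by_contra hlt
  push_neg at hlt
  -- the composite linear map (s₁ → ℝ) → (s₀ → ℝ)
  set L : (s₁ → ℝ) →ₗ[ℝ] (s₀ → ℝ) :=
    (LinearMap.funLeft ℝ ℝ (fun j : s₀ => (j : ι))) ∘ₗ A.mulVecLin ∘ₗ extZero s₁ with hL
  have hnotinj : ¬ Function.Injective L := by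
    intro hinj
    have := LinearMap.finrank_le_finrank_of_injective hinj
    simp only [Module.finrank_fintype_fun_eq_card, Fintype.card_coe] at this
    omega
  rw [Function.not_injective_iff] at hnotinj
  obtain ⟨c₁, c₂, hc12, hne⟩ := hnotinj
  set c : s₁ → ℝ := c₁ - c₂ with hcdef
  have hc : c ≠ 0 := sub_ne_zero.mpr hne
  have hLc : L c = 0 := by rw [hcdef, map_sub, hc12, sub_self]
  set x : ι → ℝ := extZero s₁ c with hx
  obtain ⟨j, hj⟩ := Function.ne_iff.mp hc
  have hj' : c j ≠ 0 := by simpa using hj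
  -- positivity of the s₁-form at x
  have hpos : 0 < x ⬝ᵥ (Matrix.diagonal (sgn s₁) *ᵥ x) := by
    simp only [dotProduct, Matrix.mulVec_diagonal]
    apply Finset.sum_pos'
    · intro i _
      by_cases h : i ∈ s₁
      · rw [sgn_apply_mem h]; nlinarith [sq_nonneg (x i)]
      · rw [hx, extZero_apply_not_mem _ _ h]; simp
    · refine ⟨(j : ι), Finset.mem_univ _, ?_⟩
      have hxj : x (j : ι) = c j := by
        rw [hx, extZero_apply_mem _ _ j.2]
      rw [hxj, sgn_apply_mem j.2]
      have := mul_self_pos.mpr hj'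
      nlinarith
  -- the transformed vector is ≤ 0 for the s₀-form
  set y : ι → ℝ := A *ᵥ x with hy
  have hy0 : ∀ i : ι, i ∈ s₀ → y i = 0 := by
    intro i hi
    have := congrFun hLc ⟨i, hi⟩
    simpa [hL, LinearMap.funLeft, hy, hx] using this
  have hneg : y ⬝ᵥ (Matrix.diagonal (sgn s₀) *ᵥ y) ≤ 0 := by
    simp only [dotProduct, Matrix.mulVec_diagonal]
    apply Finset.sum_nonpos
    intro i _
    by_cases h : i ∈ s₀
    · rw [hy0 i h]; simp
    · rw [sgn_apply_not_mem h]; nlinarith [sq_nonneg (y i)]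
  have hiden : y ⬝ᵥ (Matrix.diagonal (sgn s₀) *ᵥ y) = x ⬝ᵥ (Matrix.diagonal (sgn s₁) *ᵥ x) := by
    rw [hy, dot_mulVec_left, dot_mulVec_right, hA]
  linarith

lemma inertia_eq (A : Matrix ι ι ℝ) (hA : IsUnit A.det) (s₀ s₁ : Finset ι)
    (h : Aᵀ * Matrix.diagonal (sgn s₀) * A = Matrix.diagonal (sgn s₁)) :
    s₀.card = s₁.card := by
  refine le_antisymm ?_ (inertia_le A s₀ s₁ h)
  apply inertia_le A⁻¹ s₁ s₀
  have h1 : A * A⁻¹ = 1 := Matrix.mul_nonsing_inv A hA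
  have : (A⁻¹)ᵀ * (Aᵀ * Matrix.diagonal (sgn s₀) * A) * A⁻¹ =
      (A * A⁻¹)ᵀ * Matrix.diagonal (sgn s₀) * (A * A⁻¹) := by
    simp only [Matrix.transpose_mul]
    noncomm_ring
  rw [h] at this
  rw [this, h1]
  simp

end SplitOrbitsAux

namespace SplitOrbitsAux
variable {ι : Type*} [Fintype ι] [DecidableEq ι]

/-! ### charpoly lemmas -/

lemma charpoly_conj {R : Type*} [CommRing R] {T P A : Matrix ι ι R}
    (hP : IsUnit P.det) (h : T * P = P * A) : T.charpoly = A.charpoly := by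
  have key : Matrix.charmatrix T * P.map C = P.map C * Matrix.charmatrix A := by
    simp only [Matrix.charmatrix, sub_mul, mul_sub]
    congr 1
    · exact Matrix.scalar_commute X (fun r => Commute.all X r) (P.map C)
    · rw [RingHom.mapMatrix_apply, RingHom.mapMatrix_apply, ← Matrix.map_mul, ← Matrix.map_mul, h]
  have hdet := congrArg Matrix.det key
  rw [Matrix.det_mul, Matrix.det_mul, ← RingHom.mapMatrix_apply, ← RingHom.map_det] at hdet
  have hu : IsUnit (C P.det) := hP.map C
  rw [Matrix.charpoly, Matrix.charpoly]
  exact hu.mul_left_cancel (by rw [mul_comm (C P.det), hdet, mul_comm])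

lemma eval_charpoly {T : Matrix ι ι ℝ} (x : ℝ) :
    T.charpoly.eval x = (x • (1 : Matrix ι ι ℝ) - T).det := by
  rw [Matrix.charpoly, ← coe_evalRingHom, RingHom.map_det]
  congr 1
  ext i j
  by_cases h : i = j
  · subst h; simp [Matrix.charmatrix_apply_eq, Matrix.one_apply]
  · simp [Matrix.charmatrix_apply_ne _ _ _ h, Matrix.one_apply_ne h]

lemma charpoly_diagonal [LinearOrder ι] (d : ι → ℝ) :
    (Matrix.diagonal d).charpoly = ∏ i, (X - C (d i)) := by
  rw [Matrix.charpoly_of_upperTriangular _ (Matrix.blockTriangular_diagonal d)]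
  simp

end SplitOrbitsAux

namespace SplitOrbitsAux

variable {n : ℕ}

lemma splitGram_apply (n : ℕ) (i j : Fin (2*n+1)) :
    splitGram ℝ n i j = if j = i.rev then 1 else 0 := by
  have hi := i.isLt
  have hj := j.isLt
  have : ((i : ℕ) + (j : ℕ) = 2 * n) ↔ j = i.rev := by
    rw [Fin.ext_iff, Fin.val_rev]
    omega
  simp only [splitGram, Matrix.of_apply, this]

lemma gram_transpose (n : ℕ) : (splitGram ℝ n)ᵀ = splitGram ℝ n := by
  ext i j
  simp only [Matrix.transpose_apply, splitGram, Matrix.of_apply, add_comm]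

lemma gram_mul_self (n : ℕ) : splitGram ℝ n * splitGram ℝ n = 1 := by
  ext i j
  rw [Matrix.mul_apply]
  simp only [splitGram_apply]
  rw [Finset.sum_eq_single i.rev (by intro b _ hb; simp [hb]) (by simp)]
  simp [Fin.rev_rev, Matrix.one_apply, eq_comm]

lemma gram_det_isUnit (n : ℕ) : IsUnit (splitGram ℝ n).det :=
  Matrix.isUnit_det_of_left_inverse (gram_mul_self n)

/-- The key notion: `P` diagonalizes `T` with sign pattern `s`. -/
def valid (n : ℕ) (r : Fin (2*n+1) → ℝ) (T P : Matrix (Fin (2*n+1)) (Fin (2*n+1)) ℝ)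
    (s : Finset (Fin (2*n+1))) : Prop :=
  IsUnit P.det ∧ T * P = P * Matrix.diagonal r ∧
    Pᵀ * splitGram ℝ n * P = Matrix.diagonal (sgn s)

lemma exists_eigvec {N : ℕ} {T : Matrix (Fin N) (Fin N) ℝ} {r : Fin N → ℝ}
    (hcp : T.charpoly = ∏ i, (X - C (r i))) (i : Fin N) :
    ∃ v : Fin N → ℝ, v ≠ 0 ∧ T *ᵥ v = r i • v := by
  have hdet : (r i • (1 : Matrix (Fin N) (Fin N) ℝ) - T).det = 0 := by
    rw [← eval_charpoly, hcp, eval_prod]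
    apply Finset.prod_eq_zero (Finset.mem_univ i)
    simp
  obtain ⟨v, hv, hveq⟩ := (Matrix.exists_mulVec_eq_zero_iff).mpr hdet
  refine ⟨v, hv, ?_⟩
  rw [Matrix.sub_mulVec, Matrix.smul_mulVec, Matrix.one_mulVec, sub_eq_zero] at hveq
  exact hveq.symm

lemma exists_valid {r : Fin (2*n+1) → ℝ} (hr : Function.Injective r)
    {T : Matrix (Fin (2*n+1)) (Fin (2*n+1)) ℝ}
    (hsa : Tᵀ * splitGram ℝ n = splitGram ℝ n * T)
    (hcp : T.charpoly = ∏ i, (X - C (r i))) :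
    ∃ P s, valid n r T P s := by
  classical
  choose v hv0 hveq using fun i => exists_eigvec hcp i
  set P₁ : Matrix (Fin (2*n+1)) (Fin (2*n+1)) ℝ := Matrix.of (fun a i => v i a) with hP₁
  have hli : LinearIndependent ℝ (fun i => P₁ᵀ i) := by
    rw [show (fun i => P₁ᵀ i) = v from funext fun i => rfl]
    apply Module.End.eigenvectors_linearIndependent' (Matrix.mulVecLin T) r hr
    intro i
    exact ⟨Module.End.mem_eigenspace_iff.mpr (by rw [Matrix.mulVecLin_apply]; exact hveq i),
      hv0 i⟩
  have hP₁u : IsUnit P₁.det := (Matrix.isUnit_iff_isUnit_det _).mp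
    (Matrix.linearIndependent_cols_iff_isUnit.mp hli)
  have hTP₁ : T * P₁ = P₁ * Matrix.diagonal r := by
    ext a i
    have h2 := congrFun (hveq i) a
    simp only [Matrix.mulVec, dotProduct, Pi.smul_apply, smul_eq_mul] at h2
    rw [Matrix.mul_apply, Matrix.mul_diagonal]
    simpa [hP₁, mul_comm] using h2
  set M : Matrix (Fin (2*n+1)) (Fin (2*n+1)) ℝ := P₁ᵀ * splitGram ℝ n * P₁ with hM
  have hMD : M * Matrix.diagonal r = Matrix.diagonal r * M := by
    calc M * Matrix.diagonal r
        = P₁ᵀ * splitGram ℝ n * (P₁ * Matrix.diagonal r) := by rw [hM, Matrix.mul_assoc]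
      _ = P₁ᵀ * (splitGram ℝ n * T) * P₁ := by rw [← hTP₁]; noncomm_ring
      _ = P₁ᵀ * (Tᵀ * splitGram ℝ n) * P₁ := by rw [hsa]
      _ = (T * P₁)ᵀ * splitGram ℝ n * P₁ := by rw [Matrix.transpose_mul]; noncomm_ring
      _ = (P₁ * Matrix.diagonal r)ᵀ * splitGram ℝ n * P₁ := by rw [hTP₁]
      _ = Matrix.diagonal r * M := by
          rw [Matrix.transpose_mul, Matrix.diagonal_transpose, hM]; noncomm_ring
  have hoff : ∀ i j, i ≠ j → M i j = 0 := by
    intro i j hij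
    have h5 : (M * Matrix.diagonal r) i j = (Matrix.diagonal r * M) i j := by rw [hMD]
    rw [Matrix.mul_diagonal, Matrix.diagonal_mul] at h5
    have h6 : M i j * (r j - r i) = 0 := by rw [mul_sub]; linarith
    rcases mul_eq_zero.mp h6 with h | h
    · exact h
    · exact absurd (sub_eq_zero.mp h) (fun hh => hij (hr hh).symm)
  set d : Fin (2*n+1) → ℝ := fun i => M i i with hd
  have hMdiag : M = Matrix.diagonal d := by
    ext i j
    by_cases h : i = j
    · subst h; simp [hd]
    · rw [Matrix.diagonal_apply_ne _ h]; exact hoff i j h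
  have hMu : IsUnit M.det := by
    rw [hM, Matrix.det_mul, Matrix.det_mul, Matrix.det_transpose]
    exact (hP₁u.mul (gram_det_isUnit n)).mul hP₁u
  have hdne : ∀ i, d i ≠ 0 := by
    rw [hMdiag, Matrix.det_diagonal] at hMu
    exact fun i => Finset.prod_ne_zero_iff.mp hMu.ne_zero i (Finset.mem_univ i)
  set c : Fin (2*n+1) → ℝ := fun i => (Real.sqrt |d i|)⁻¹ with hcdef
  have hsq : ∀ i, Real.sqrt |d i| * Real.sqrt |d i| = |d i| :=
    fun i => Real.mul_self_sqrt (abs_nonneg _)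
  have hcne : ∀ i, c i ≠ 0 := by
    intro i
    have : 0 < Real.sqrt |d i| := Real.sqrt_pos.mpr (abs_pos.mpr (hdne i))
    positivity
  refine ⟨P₁ * Matrix.diagonal c, Finset.univ.filter (fun i => 0 < d i), ?_, ?_, ?_⟩
  · rw [Matrix.det_mul, Matrix.det_diagonal]
    exact hP₁u.mul (isUnit_iff_ne_zero.mpr (Finset.prod_ne_zero_iff.mpr fun i _ => hcne i))
  · calc T * (P₁ * Matrix.diagonal c) = (T * P₁) * Matrix.diagonal c := by rw [Matrix.mul_assoc]
      _ = P₁ * (Matrix.diagonal r * Matrix.diagonal c) := by rw [hTP₁, Matrix.mul_assoc]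
      _ = P₁ * (Matrix.diagonal c * Matrix.diagonal r) := by
          rw [Matrix.diagonal_mul_diagonal, Matrix.diagonal_mul_diagonal,
            show (fun i => r i * c i) = fun i => c i * r i from funext fun i => mul_comm _ _]
      _ = P₁ * Matrix.diagonal c * Matrix.diagonal r := by rw [Matrix.mul_assoc]
  · have : (P₁ * Matrix.diagonal c)ᵀ * splitGram ℝ n * (P₁ * Matrix.diagonal c)
        = Matrix.diagonal c * M * Matrix.diagonal c := by
      rw [Matrix.transpose_mul, Matrix.diagonal_transpose, hM]; noncomm_ring
    rw [this, hMdiag]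
    ext i j
    rw [Matrix.diagonal_mul_diagonal, Matrix.diagonal_mul_diagonal]
    rcases eq_or_ne i j with rfl | hij
    swap
    · rw [Matrix.diagonal_apply_ne _ hij, Matrix.diagonal_apply_ne _ hij]
    rw [Matrix.diagonal_apply_eq, Matrix.diagonal_apply_eq]
    show c i * d i * c i = sgn _ i
    have h8 : c i * c i = |d i|⁻¹ := by
      rw [hcdef]
      simp only [← mul_inv, hsq i]
    have h7 : c i * d i * c i = d i * |d i|⁻¹ := by
      rw [← h8]; ring
    by_cases hpos : 0 < d i
    · rw [h7, abs_of_pos hpos, mul_inv_cancel₀ (hdne i), sgn_apply_mem (by simp [hpos])]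
    · have hneg : d i < 0 := lt_of_le_of_ne (not_lt.mp hpos) (hdne i)
      rw [h7, abs_of_neg hneg, sgn_apply_not_mem (by simp [hpos]), inv_neg, mul_neg,
        mul_inv_cancel₀ (hdne i)]

lemma inv_intertwine {r : Fin (2*n+1) → ℝ} {T P : Matrix (Fin (2*n+1)) (Fin (2*n+1)) ℝ}
    (hu : IsUnit P.det) (hd : T * P = P * Matrix.diagonal r) :
    P⁻¹ * T = Matrix.diagonal r * P⁻¹ := by
  have hP11 : P⁻¹ * P = 1 := Matrix.nonsing_inv_mul _ hu
  have hP12 : P * P⁻¹ = 1 := Matrix.mul_nonsing_inv _ hu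
  calc P⁻¹ * T = P⁻¹ * T * (P * P⁻¹) := by rw [hP12, mul_one]
    _ = P⁻¹ * (T * P) * P⁻¹ := by noncomm_ring
    _ = P⁻¹ * P * Matrix.diagonal r * P⁻¹ := by rw [hd]; noncomm_ring
    _ = Matrix.diagonal r * P⁻¹ := by rw [hP11, one_mul]

lemma valid_unique {r : Fin (2*n+1) → ℝ} (hr : Function.Injective r)
    {T P₁ P₂ : Matrix (Fin (2*n+1)) (Fin (2*n+1)) ℝ} {s₁ s₂ : Finset (Fin (2*n+1))}
    (h1 : valid n r T P₁ s₁) (h2 : valid n r T P₂ s₂) : s₁ = s₂ := by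
  obtain ⟨hu1, hd1, hg1⟩ := h1
  obtain ⟨hu2, hd2, hg2⟩ := h2
  set Cm := P₁⁻¹ * P₂ with hCm
  have hP12 : P₁ * P₁⁻¹ = 1 := Matrix.mul_nonsing_inv _ hu1
  have hcomm : Cm * Matrix.diagonal r = Matrix.diagonal r * Cm := by
    calc Cm * Matrix.diagonal r = P₁⁻¹ * (P₂ * Matrix.diagonal r) := by
          rw [hCm, Matrix.mul_assoc]
      _ = P₁⁻¹ * (T * P₂) := by rw [hd2]
      _ = (P₁⁻¹ * T) * P₂ := by rw [Matrix.mul_assoc]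
      _ = Matrix.diagonal r * Cm := by
          rw [inv_intertwine hu1 hd1, hCm, Matrix.mul_assoc]
  have hoff : ∀ i j, i ≠ j → Cm i j = 0 := by
    intro i j hij
    have h5 : (Cm * Matrix.diagonal r) i j = (Matrix.diagonal r * Cm) i j := by rw [hcomm]
    rw [Matrix.mul_diagonal, Matrix.diagonal_mul] at h5
    have h6 : Cm i j * (r j - r i) = 0 := by rw [mul_sub]; linarith
    rcases mul_eq_zero.mp h6 with h | h
    · exact h
    · exact absurd (sub_eq_zero.mp h) (fun hh => hij (hr hh).symm)
  set cd : Fin (2*n+1) → ℝ := fun i => Cm i i with hcd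
  have hCdiag : Cm = Matrix.diagonal cd := by
    ext i j
    by_cases h : i = j
    · subst h; simp [hcd]
    · rw [Matrix.diagonal_apply_ne _ h]; exact hoff i j h
  have hCu : IsUnit Cm.det := by
    rw [hCm, Matrix.det_mul]
    exact (Matrix.isUnit_nonsing_inv_det _ hu1).mul hu2
  have hcne : ∀ i, cd i ≠ 0 := by
    rw [hCdiag, Matrix.det_diagonal] at hCu
    exact fun i => Finset.prod_ne_zero_iff.mp hCu.ne_zero i (Finset.mem_univ i)
  have hP2 : P₂ = P₁ * Cm := by rw [hCm, ← Matrix.mul_assoc, hP12, one_mul]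
  have hCt : Cmᵀ = Matrix.diagonal cd := by rw [hCdiag, Matrix.diagonal_transpose]
  have key : Matrix.diagonal cd * Matrix.diagonal (sgn s₁) * Matrix.diagonal cd
      = Matrix.diagonal (sgn s₂) := by
    calc Matrix.diagonal cd * Matrix.diagonal (sgn s₁) * Matrix.diagonal cd
        = Cmᵀ * (P₁ᵀ * splitGram ℝ n * P₁) * Cm := by rw [hCt, hg1, hCdiag]
      _ = (P₁ * Cm)ᵀ * splitGram ℝ n * (P₁ * Cm) := by
          rw [Matrix.transpose_mul P₁ Cm]
          simp only [Matrix.mul_assoc]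
      _ = Matrix.diagonal (sgn s₂) := by rw [← hP2, hg2]
  rw [Matrix.diagonal_mul_diagonal, Matrix.diagonal_mul_diagonal] at key
  have hent : ∀ i, cd i * sgn s₁ i * cd i = sgn s₂ i := by
    intro i
    have h7 := Matrix.ext_iff.mpr key i i
    rw [Matrix.diagonal_apply_eq, Matrix.diagonal_apply_eq] at h7
    exact h7
  ext i
  have h := hent i
  have hpos := mul_self_pos.mpr (hcne i)
  constructor
  · intro hi
    by_contra hni
    rw [sgn_apply_mem hi, sgn_apply_not_mem hni] at h
    nlinarith
  · intro hi
    by_contra hni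
    rw [sgn_apply_not_mem hni, sgn_apply_mem hi] at h
    nlinarith

lemma valid_transport {r : Fin (2*n+1) → ℝ}
    {T₁ T₂ g P : Matrix (Fin (2*n+1)) (Fin (2*n+1)) ℝ} {s : Finset (Fin (2*n+1))}
    (hg : gᵀ * splitGram ℝ n * g = splitGram ℝ n) (hgu : IsUnit g.det)
    (hconj : g * T₁ = T₂ * g) (h : valid n r T₁ P s) : valid n r T₂ (g * P) s := by
  obtain ⟨hu, hd, hG⟩ := h
  refine ⟨by rw [Matrix.det_mul]; exact hgu.mul hu, ?_, ?_⟩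
  · calc T₂ * (g * P) = (T₂ * g) * P := by rw [Matrix.mul_assoc]
      _ = g * (T₁ * P) := by rw [← hconj, Matrix.mul_assoc]
      _ = g * P * Matrix.diagonal r := by rw [hd, Matrix.mul_assoc]
  · calc (g * P)ᵀ * splitGram ℝ n * (g * P)
        = Pᵀ * (gᵀ * splitGram ℝ n * g) * P := by rw [Matrix.transpose_mul]; noncomm_ring
      _ = Matrix.diagonal (sgn s) := by rw [hg, hG]

/-- the diagonal sign-flip matrix -/
def flipJ (n : ℕ) : Matrix (Fin (2*n+1)) (Fin (2*n+1)) ℝ :=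
  Matrix.diagonal (fun i => if i = 0 then (-1 : ℝ) else 1)

lemma flipJ_det : (flipJ n).det = -1 := by
  rw [flipJ, Matrix.det_diagonal]
  rw [Finset.prod_ite_eq' Finset.univ (0 : Fin (2*n+1)) (fun _ => (-1 : ℝ))]
  simp

lemma valid_flip {r : Fin (2*n+1) → ℝ} {T P : Matrix (Fin (2*n+1)) (Fin (2*n+1)) ℝ}
    {s : Finset (Fin (2*n+1))} (h : valid n r T P s) : valid n r T (P * flipJ n) s := by
  obtain ⟨hu, hd, hG⟩ := h
  have hJu : IsUnit (flipJ n).det := by rw [flipJ_det]; exact isUnit_iff_ne_zero.mpr (by norm_num)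
  have hJt : (flipJ n)ᵀ = flipJ n := by rw [flipJ, Matrix.diagonal_transpose]
  refine ⟨by rw [Matrix.det_mul]; exact hu.mul hJu, ?_, ?_⟩
  · calc T * (P * flipJ n) = (T * P) * flipJ n := by rw [Matrix.mul_assoc]
      _ = P * (Matrix.diagonal r * flipJ n) := by rw [hd, Matrix.mul_assoc]
      _ = P * (flipJ n * Matrix.diagonal r) := by
          rw [flipJ, Matrix.diagonal_mul_diagonal, Matrix.diagonal_mul_diagonal,
            show (fun i : Fin (2*n+1) => r i * (if i = 0 then (-1:ℝ) else 1))
              = fun i => (if i = 0 then (-1:ℝ) else 1) * r i from funext fun i => mul_comm _ _]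
      _ = P * flipJ n * Matrix.diagonal r := by rw [Matrix.mul_assoc]
  · have : (P * flipJ n)ᵀ * splitGram ℝ n * (P * flipJ n)
        = flipJ n * (Pᵀ * splitGram ℝ n * P) * flipJ n := by
      rw [Matrix.transpose_mul, hJt]; noncomm_ring
    rw [this, hG, flipJ, Matrix.diagonal_mul_diagonal, Matrix.diagonal_mul_diagonal,
      Matrix.diagonal_eq_diagonal_iff]
    intro i
    by_cases h0 : i = 0 <;> simp [h0]

lemma valid_relate {r : Fin (2*n+1) → ℝ}
    {T₁ T₂ P₁ P₂ : Matrix (Fin (2*n+1)) (Fin (2*n+1)) ℝ} {s : Finset (Fin (2*n+1))}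
    (h1 : valid n r T₁ P₁ s) (h2 : valid n r T₂ P₂ s) :
    ∃ g : Matrix (Fin (2*n+1)) (Fin (2*n+1)) ℝ,
      gᵀ * splitGram ℝ n * g = splitGram ℝ n ∧ g.det = 1 ∧ g * T₁ = T₂ * g := by
  -- generic pair construction
  have pair : ∀ (P₂' : Matrix (Fin (2*n+1)) (Fin (2*n+1)) ℝ), valid n r T₂ P₂' s →
      (P₂' * P₁⁻¹)ᵀ * splitGram ℝ n * (P₂' * P₁⁻¹) = splitGram ℝ n ∧
      (P₂' * P₁⁻¹) * T₁ = T₂ * (P₂' * P₁⁻¹) := by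
    intro P₂' h2'
    obtain ⟨hu1, hd1, hg1⟩ := h1
    obtain ⟨hu2, hd2, hg2⟩ := h2'
    have hP11 : P₁⁻¹ * P₁ = 1 := Matrix.nonsing_inv_mul _ hu1
    have hP12 : P₁ * P₁⁻¹ = 1 := Matrix.mul_nonsing_inv _ hu1
    have hti : (P₁⁻¹)ᵀ * (P₁ᵀ * splitGram ℝ n * P₁) * P₁⁻¹ = splitGram ℝ n := by
      have expand : (P₁⁻¹)ᵀ * (P₁ᵀ * splitGram ℝ n * P₁) * P₁⁻¹
          = (P₁ * P₁⁻¹)ᵀ * splitGram ℝ n * (P₁ * P₁⁻¹) := by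
        rw [Matrix.transpose_mul]; noncomm_ring
      rw [expand, hP12, Matrix.transpose_one, one_mul, mul_one]
    constructor
    · calc (P₂' * P₁⁻¹)ᵀ * splitGram ℝ n * (P₂' * P₁⁻¹)
          = (P₁⁻¹)ᵀ * (P₂'ᵀ * splitGram ℝ n * P₂') * P₁⁻¹ := by
            rw [Matrix.transpose_mul]; noncomm_ring
        _ = (P₁⁻¹)ᵀ * (P₁ᵀ * splitGram ℝ n * P₁) * P₁⁻¹ := by rw [hg2, hg1]
        _ = splitGram ℝ n := hti
    · calc (P₂' * P₁⁻¹) * T₁ = P₂' * (P₁⁻¹ * T₁) := by rw [Matrix.mul_assoc]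
        _ = (P₂' * Matrix.diagonal r) * P₁⁻¹ := by
            rw [inv_intertwine hu1 hd1, Matrix.mul_assoc]
        _ = T₂ * (P₂' * P₁⁻¹) := by rw [← hd2, Matrix.mul_assoc]
  obtain ⟨hiso, hconj⟩ := pair P₂ h2
  have hdet2 : (P₂ * P₁⁻¹).det * (P₂ * P₁⁻¹).det = 1 := by
    have hdd := congrArg Matrix.det hiso
    rw [Matrix.det_mul, Matrix.det_mul, Matrix.det_transpose] at hdd
    have h9 : ((P₂ * P₁⁻¹).det * (P₂ * P₁⁻¹).det) * (splitGram ℝ n).det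
        = 1 * (splitGram ℝ n).det := by rw [one_mul]; linear_combination hdd
    exact mul_right_cancel₀ (gram_det_isUnit n).ne_zero h9
  rcases mul_self_eq_one_iff.mp hdet2 with hone | hmone
  · exact ⟨P₂ * P₁⁻¹, hiso, hone, hconj⟩
  · obtain ⟨hiso', hconj'⟩ := pair (P₂ * flipJ n) (valid_flip h2)
    refine ⟨P₂ * flipJ n * P₁⁻¹, hiso', ?_, hconj'⟩
    rw [Matrix.det_mul] at hmone
    rw [Matrix.det_mul, Matrix.det_mul, flipJ_det]
    linear_combination -hmone



/-! ### the standard congruence of the split gram matrix to a `±1` diagonal matrix -/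

noncomputable def stdc : ℝ := (Real.sqrt 2)⁻¹

lemma stdc_mul_self : stdc * stdc = 1/2 := by
  rw [stdc, ← mul_inv, Real.mul_self_sqrt (by norm_num : (0:ℝ) ≤ 2)]
  norm_num

noncomputable def aQ (n : ℕ) (i : Fin (2*n+1)) : ℝ :=
  if (i:ℕ) < n then stdc else if (i:ℕ) = n then 1 else -stdc

noncomputable def bQ (n : ℕ) (i : Fin (2*n+1)) : ℝ :=
  if (i:ℕ) < n then stdc else if (i:ℕ) = n then 0 else stdc

noncomputable def stdQ (n : ℕ) : Matrix (Fin (2*n+1)) (Fin (2*n+1)) ℝ :=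
  Matrix.of fun a i => aQ n i * (if a = i then 1 else 0) + bQ n i * (if a = i.rev then 1 else 0)

lemma fin_rev_val (i : Fin (2*n+1)) : ((i.rev : Fin (2*n+1)) : ℕ) = 2*n - (i:ℕ) := by
  rw [Fin.val_rev]
  omega

lemma stdQ_entry (i j : Fin (2*n+1)) :
    ((stdQ n)ᵀ * splitGram ℝ n * stdQ n) i j
      = (aQ n i * aQ n j + bQ n i * bQ n j) * (if i = j.rev then 1 else 0)
        + (aQ n i * bQ n j + bQ n i * aQ n j) * (if i = j then 1 else 0) := by
  have hGQ : ∀ (a : Fin (2*n+1)), (splitGram ℝ n * stdQ n) a j = stdQ n a.rev j := by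
    intro a
    rw [Matrix.mul_apply]
    simp only [splitGram_apply]
    rw [Finset.sum_eq_single a.rev (fun b _ hb => by rw [if_neg hb, zero_mul]) (by simp)]
    rw [if_pos rfl, one_mul]
  rw [Matrix.mul_assoc, Matrix.mul_apply]
  have step1 : ∀ (a : Fin (2*n+1)), (stdQ n)ᵀ i a * (splitGram ℝ n * stdQ n) a j
      = (aQ n i * (if a = i then 1 else 0) + bQ n i * (if a = i.rev then 1 else 0))
        * (aQ n j * (if a = j.rev then 1 else 0) + bQ n j * (if a = j then 1 else 0)) := by
    intro a
    rw [Matrix.transpose_apply, hGQ]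
    have e1 : (a.rev = j) = (a = j.rev) :=
      propext ⟨fun h => by rw [← h, Fin.rev_rev], fun h => by rw [h, Fin.rev_rev]⟩
    have e2 : (a.rev = j.rev) = (a = j) :=
      propext ⟨fun h => Fin.rev_injective h, fun h => by rw [h]⟩
    show stdQ n a i * stdQ n a.rev j = _
    simp only [stdQ, Matrix.of_apply, e1, e2]
  simp only [step1]
  have hsum : ∀ (x y : ℝ) (p q : Fin (2*n+1)),
      (∑ a, (x * (if a = p then (1:ℝ) else 0)) * (y * (if a = q then 1 else 0)))
        = x * y * (if p = q then 1 else 0) := by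
    intro x y p q
    rw [Finset.sum_eq_single p (fun b _ hb => by rw [if_neg hb]; ring) (by simp)]
    by_cases h : p = q <;> simp [h] <;> ring
  have expand : ∀ (a : Fin (2*n+1)),
      (aQ n i * (if a = i then (1:ℝ) else 0) + bQ n i * (if a = i.rev then 1 else 0))
        * (aQ n j * (if a = j.rev then 1 else 0) + bQ n j * (if a = j then 1 else 0))
      = (aQ n i * (if a = i then (1:ℝ) else 0)) * (aQ n j * (if a = j.rev then 1 else 0))
        + (aQ n i * (if a = i then (1:ℝ) else 0)) * (bQ n j * (if a = j then 1 else 0))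
        + ((bQ n i * (if a = i.rev then (1:ℝ) else 0)) * (aQ n j * (if a = j.rev then 1 else 0))
        + (bQ n i * (if a = i.rev then (1:ℝ) else 0)) * (bQ n j * (if a = j then 1 else 0))) := by
    intro a; ring
  simp only [expand]
  rw [Finset.sum_add_distrib, Finset.sum_add_distrib, Finset.sum_add_distrib,
    hsum, hsum, hsum, hsum]
  have e3 : (i.rev = j.rev) = (i = j) :=
    propext ⟨fun h => Fin.rev_injective h, fun h => by rw [h]⟩
  have e4 : (i.rev = j) = (i = j.rev) :=
    propext ⟨fun h => by rw [← h, Fin.rev_rev], fun h => by rw [h, Fin.rev_rev]⟩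
  simp only [e3, e4]
  ring

/-- The standard plus-set: indices `≤ n`. -/
def stdS (n : ℕ) : Finset (Fin (2*n+1)) := Finset.univ.filter (fun i => (i:ℕ) ≤ n)

lemma card_stdS : (stdS n).card = n + 1 := by
  have himg : stdS n
      = Finset.image (Fin.castLE (by omega : n+1 ≤ 2*n+1)) Finset.univ := by
    ext x
    simp only [stdS, Finset.mem_filter, Finset.mem_univ, true_and, Finset.mem_image]
    constructor
    · intro hx
      exact ⟨⟨(x:ℕ), by omega⟩, Fin.ext rfl⟩
    · rintro ⟨y, rfl⟩
      have := y.isLt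
      show ((Fin.castLE _ y : Fin (2*n+1)) : ℕ) ≤ n
      rw [Fin.coe_castLE]
      omega
  rw [himg, Finset.card_image_of_injective _ (Fin.castLE_injective _), Finset.card_univ,
    Fintype.card_fin]

lemma stdQ_gram : (stdQ n)ᵀ * splitGram ℝ n * stdQ n = Matrix.diagonal (sgn (stdS n)) := by
  ext i j
  rw [stdQ_entry]
  have hin := i.isLt
  have hjn := j.isLt
  rcases eq_or_ne i j with rfl | hij
  · rw [Matrix.diagonal_apply_eq, if_pos rfl]
    rcases lt_trichotomy (i:ℕ) n with hlt | heq | hgt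
    · have hne : i ≠ i.rev := by
        intro h
        have := congrArg Fin.val h
        rw [fin_rev_val] at this
        omega
      rw [if_neg hne, sgn_apply_mem (by simp [stdS]; omega)]
      simp only [aQ, bQ, if_pos hlt]
      have := stdc_mul_self
      ring_nf
      nlinarith [stdc_mul_self]
    · have heqr : i = i.rev := by
        apply Fin.ext
        rw [fin_rev_val]
        omega
      rw [if_pos heqr, sgn_apply_mem (by simp [stdS]; omega)]
      simp only [aQ, bQ, if_neg (by omega : ¬ (i:ℕ) < n), if_pos heq]
      ring
    · have hne : i ≠ i.rev := by
        intro h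
        have := congrArg Fin.val h
        rw [fin_rev_val] at this
        omega
      rw [if_neg hne, sgn_apply_not_mem (by simp [stdS]; omega)]
      simp only [aQ, bQ, if_neg (by omega : ¬ (i:ℕ) < n), if_neg (by omega : ¬ (i:ℕ) = n)]
      nlinarith [stdc_mul_self]
  · rw [Matrix.diagonal_apply_ne _ hij, if_neg hij]
    by_cases hrev : i = j.rev
    · rw [if_pos hrev]
      have hvi : (i:ℕ) = 2*n - (j:ℕ) := by rw [hrev, fin_rev_val]
      have hjne : (j:ℕ) ≠ n := by
        intro h
        apply hij
        rw [hrev]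
        apply Fin.ext
        rw [fin_rev_val]
        omega
      rcases lt_or_gt_of_ne hjne with hjlt | hjgt
      · have hilarge : ¬ (i:ℕ) < n ∧ (i:ℕ) ≠ n := by omega
        simp only [aQ, bQ, if_pos hjlt, if_neg hilarge.1, if_neg hilarge.2]
        ring
      · have hismall : (i:ℕ) < n := by omega
        simp only [aQ, bQ, if_pos hismall, if_neg (by omega : ¬ (j:ℕ) < n),
          if_neg (by omega : ¬ (j:ℕ) = n)]
        ring
    · rw [if_neg hrev]
      ring

lemma stdQ_det_isUnit : IsUnit (stdQ n).det := by
  have h := congrArg Matrix.det (stdQ_gram (n := n))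
  rw [Matrix.det_mul, Matrix.det_mul, Matrix.det_transpose, Matrix.det_diagonal] at h
  have hne : (∏ i, sgn (stdS n) i) ≠ 0 := by
    apply Finset.prod_ne_zero_iff.mpr
    intro i _
    by_cases hi : i ∈ stdS n
    · rw [sgn_apply_mem hi]; norm_num
    · rw [sgn_apply_not_mem hi]; norm_num
  apply isUnit_iff_ne_zero.mpr
  intro h0
  rw [h0] at h
  simp at h
  exact hne h.symm

/-- every sign-set of the right cardinality is realized by a congruence of the gram matrix -/
lemma exists_Ps {s : Finset (Fin (2*n+1))} (hs : s.card = n+1) :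
    ∃ P : Matrix (Fin (2*n+1)) (Fin (2*n+1)) ℝ, IsUnit P.det ∧
      Pᵀ * splitGram ℝ n * P = Matrix.diagonal (sgn s) := by
  classical
  have hcards : Fintype.card {x : Fin (2*n+1) // x ∈ s} = Fintype.card {x : Fin (2*n+1) // x ∈ stdS n} := by
    rw [Fintype.card_of_subtype s (fun _ => Iff.rfl),
      Fintype.card_of_subtype (stdS n) (fun _ => Iff.rfl), hs, card_stdS]
  have hcardc : Fintype.card {x : Fin (2*n+1) // ¬ x ∈ s}
      = Fintype.card {x : Fin (2*n+1) // ¬ x ∈ stdS n} := by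
    rw [Fintype.card_subtype_compl, Fintype.card_subtype_compl, hcards]
  set e := Fintype.equivOfCardEq hcards
  set ff := Fintype.equivOfCardEq hcardc
  set σ : Equiv.Perm (Fin (2*n+1)) := Equiv.subtypeCongr e ff with hσdef
  have hσ : ∀ x, (σ x ∈ stdS n ↔ x ∈ s) := by
    intro x
    by_cases hx : x ∈ s
    · have : σ x = (e ⟨x, hx⟩ : Fin (2*n+1)) := by
        simp [hσdef, Equiv.subtypeCongr, hx]
      rw [this]
      exact iff_of_true (e ⟨x, hx⟩).2 hx
    · have : σ x = (ff ⟨x, hx⟩ : Fin (2*n+1)) := by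
        simp [hσdef, Equiv.subtypeCongr, hx]
      rw [this]
      exact iff_of_false (ff ⟨x, hx⟩).2 hx
  set E : Matrix (Fin (2*n+1)) (Fin (2*n+1)) ℝ :=
    Matrix.of (fun a b => if σ b = a then 1 else 0) with hE
  have hEE : Eᵀ * E = 1 := by
    ext i j
    rw [Matrix.mul_apply]
    have : ∀ a, Eᵀ i a * E a j = if a = σ i then (if σ j = a then (1:ℝ) else 0) else 0 := by
      intro a
      rw [Matrix.transpose_apply]
      by_cases h : σ i = a
      · rw [hE]
        simp [h, eq_comm]
      · rw [hE]
        simp only [Matrix.of_apply]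
        rw [if_neg h, if_neg (show ¬ a = σ i from fun hh => h hh.symm), zero_mul]
    rw [Finset.sum_congr rfl (fun a _ => this a), Finset.sum_ite_eq' Finset.univ (σ i)]
    simp only [Finset.mem_univ, if_true]
    by_cases h : i = j
    · subst h; simp [Matrix.one_apply]
    · rw [if_neg (show ¬ σ j = σ i from fun hh => h (σ.injective hh).symm),
        Matrix.one_apply_ne h]
  have hEu : IsUnit E.det := Matrix.isUnit_det_of_left_inverse hEE
  have hED : ∀ w : Fin (2*n+1) → ℝ, Eᵀ * Matrix.diagonal w * E
      = Matrix.diagonal (fun i => w (σ i)) := by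
    intro w
    ext i j
    rw [Matrix.mul_assoc, Matrix.mul_apply]
    have : ∀ a, Eᵀ i a * (Matrix.diagonal w * E) a j
        = if a = σ i then (if σ j = a then w a else 0) else 0 := by
      intro a
      rw [Matrix.transpose_apply, Matrix.diagonal_mul]
      by_cases h : σ i = a
      · rw [hE]
        simp only [Matrix.of_apply]
        rw [if_pos h, one_mul]
        rw [if_pos h.symm]
        by_cases h2 : σ j = a <;> simp [h2]
      · rw [hE]
        simp only [Matrix.of_apply]
        rw [if_neg h, if_neg (show ¬ a = σ i from fun hh => h hh.symm), zero_mul]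
    rw [Finset.sum_congr rfl (fun a _ => this a), Finset.sum_ite_eq' Finset.univ (σ i)]
    simp only [Finset.mem_univ, if_true]
    by_cases h : i = j
    · subst h
      rw [if_pos rfl, Matrix.diagonal_apply_eq]
    · rw [if_neg (show ¬ σ j = σ i from fun hh => h (σ.injective hh).symm),
        Matrix.diagonal_apply_ne _ h]
  refine ⟨stdQ n * E, ?_, ?_⟩
  · rw [Matrix.det_mul]
    exact (stdQ_det_isUnit).mul hEu
  · have : (stdQ n * E)ᵀ * splitGram ℝ n * (stdQ n * E)
        = Eᵀ * ((stdQ n)ᵀ * splitGram ℝ n * stdQ n) * E := by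
      rw [Matrix.transpose_mul]
      simp only [Matrix.mul_assoc]
    rw [this, stdQ_gram, hED, Matrix.diagonal_eq_diagonal_iff]
    intro i
    by_cases hi : i ∈ s
    · rw [sgn_apply_mem ((hσ i).mpr hi), sgn_apply_mem hi]
    · rw [sgn_apply_not_mem (fun hh => hi ((hσ i).mp hh)), sgn_apply_not_mem hi]

/-- Sylvester: any valid sign set has cardinality `n+1`. -/
lemma valid_card {r : Fin (2*n+1) → ℝ} {T P : Matrix (Fin (2*n+1)) (Fin (2*n+1)) ℝ}
    {s : Finset (Fin (2*n+1))} (h : valid n r T P s) : s.card = n + 1 := by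
  obtain ⟨hu, -, hG⟩ := h
  set Q := stdQ n
  have hQu : IsUnit Q.det := stdQ_det_isUnit
  have hQ12 : Q * Q⁻¹ = 1 := Matrix.mul_nonsing_inv _ hQu
  set A := Q⁻¹ * P with hA
  have hAu : IsUnit A.det := by
    rw [hA, Matrix.det_mul]
    exact (Matrix.isUnit_nonsing_inv_det _ hQu).mul hu
  have key : Aᵀ * Matrix.diagonal (sgn (stdS n)) * A = Matrix.diagonal (sgn s) := by
    have h1 : Aᵀ * Matrix.diagonal (sgn (stdS n)) * A
        = Aᵀ * (Qᵀ * splitGram ℝ n * Q) * A := by rw [stdQ_gram]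
    have h2 : Aᵀ * (Qᵀ * splitGram ℝ n * Q) * A
        = (Q * A)ᵀ * splitGram ℝ n * (Q * A) := by
      rw [Matrix.transpose_mul Q A]
      simp only [Matrix.mul_assoc]
    have h3 : Q * A = P := by rw [hA, ← Matrix.mul_assoc, hQ12, one_mul]
    rw [h1, h2, h3, hG]
  have := inertia_eq A hAu (stdS n) s key
  rw [← this, card_stdS]

/-- construction of a self-adjoint matrix with prescribed sign set -/
lemma exists_T (r : Fin (2*n+1) → ℝ) {s : Finset (Fin (2*n+1))} (hs : s.card = n+1) :
    ∃ T P : Matrix (Fin (2*n+1)) (Fin (2*n+1)) ℝ,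
      Tᵀ * splitGram ℝ n = splitGram ℝ n * T ∧
      T.charpoly = ∏ i, (X - C (r i)) ∧ valid n r T P s := by
  obtain ⟨P, hPu, hPG⟩ := exists_Ps hs
  have hP12 : P * P⁻¹ = 1 := Matrix.mul_nonsing_inv _ hPu
  have hP11 : P⁻¹ * P = 1 := Matrix.nonsing_inv_mul _ hPu
  set T := P * Matrix.diagonal r * P⁻¹ with hT
  have hTP : T * P = P * Matrix.diagonal r := by
    rw [hT, Matrix.mul_assoc, hP11, mul_one]
  refine ⟨T, P, ?_, ?_, hPu, hTP, hPG⟩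
  · -- self-adjointness
    have hPt : Pᵀ * (P⁻¹)ᵀ = 1 := by rw [← Matrix.transpose_mul, hP11, Matrix.transpose_one]
    have hTt : Tᵀ = (P⁻¹)ᵀ * Matrix.diagonal r * Pᵀ := by
      rw [hT, Matrix.transpose_mul, Matrix.transpose_mul, Matrix.diagonal_transpose,
        Matrix.mul_assoc]
    have hGr : splitGram ℝ n = (P⁻¹)ᵀ * Matrix.diagonal (sgn s) * P⁻¹ := by
      rw [← hPG]
      have : (P⁻¹)ᵀ * (Pᵀ * splitGram ℝ n * P) * P⁻¹
          = ((P⁻¹)ᵀ * Pᵀ) * splitGram ℝ n * (P * P⁻¹) := by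
        simp only [Matrix.mul_assoc]
      rw [this, ← Matrix.transpose_mul, hP12, Matrix.transpose_one, one_mul, mul_one]
    calc Tᵀ * splitGram ℝ n
        = ((P⁻¹)ᵀ * Matrix.diagonal r * Pᵀ) * ((P⁻¹)ᵀ * Matrix.diagonal (sgn s) * P⁻¹) := by
          rw [hTt, ← hGr]
      _ = (P⁻¹)ᵀ * Matrix.diagonal r * (Pᵀ * (P⁻¹)ᵀ) * Matrix.diagonal (sgn s) * P⁻¹ := by
          simp only [Matrix.mul_assoc]
      _ = (P⁻¹)ᵀ * (Matrix.diagonal r * Matrix.diagonal (sgn s)) * P⁻¹ := by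
          rw [hPt, mul_one]
          simp only [Matrix.mul_assoc]
      _ = (P⁻¹)ᵀ * (Matrix.diagonal (sgn s) * Matrix.diagonal r) * P⁻¹ := by
          rw [Matrix.diagonal_mul_diagonal, Matrix.diagonal_mul_diagonal,
            show (fun i => r i * sgn s i) = fun i => sgn s i * r i from
              funext fun i => mul_comm _ _]
      _ = ((P⁻¹)ᵀ * Matrix.diagonal (sgn s) * P⁻¹) * (P * Matrix.diagonal r * P⁻¹) := by
          have : P⁻¹ * (P * Matrix.diagonal r * P⁻¹)
              = Matrix.diagonal r * P⁻¹ := by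
            rw [← Matrix.mul_assoc, ← Matrix.mul_assoc, hP11, one_mul]
          rw [Matrix.mul_assoc ((P⁻¹)ᵀ * Matrix.diagonal (sgn s)), this]
          simp only [Matrix.mul_assoc]
      _ = splitGram ℝ n * T := by rw [← hGr, hT]
  · rw [charpoly_conj hPu hTP, charpoly_diagonal]



lemma splitBilin_eq (v w : Fin (2*n+1) → ℝ) :
    splitBilin v w = v ⬝ᵥ (splitGram ℝ n *ᵥ w) := rfl


lemma main_aux (n : ℕ) (r : Fin (2*n+1) → ℝ) (hr : Function.Injective r) (f : ℝ[X])
    (hf : f = ∏ i, (X - C (r i))) :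
    Nat.card (Quot fun T₁ T₂ : {T : Matrix (Fin (2*n+1)) (Fin (2*n+1)) ℝ //
          (∀ v w : Fin (2*n+1) → ℝ,
            splitBilin (T.mulVec v) w = splitBilin v (T.mulVec w)) ∧
          Matrix.charpoly T = f} =>
        ∃ g : Matrix (Fin (2*n+1)) (Fin (2*n+1)) ℝ,
          (∀ v w : Fin (2*n+1) → ℝ,
            splitBilin (g.mulVec v) (g.mulVec w) = splitBilin v w) ∧
          Matrix.det g = 1 ∧ g * T₁.val = T₂.val * g) = Nat.choose (2*n+1) (n+1) := by
  classical
  set S := {T : Matrix (Fin (2*n+1)) (Fin (2*n+1)) ℝ //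
      (∀ v w : Fin (2*n+1) → ℝ,
        splitBilin (T.mulVec v) w = splitBilin v (T.mulVec w)) ∧
      Matrix.charpoly T = f} with hS
  set Rel : S → S → Prop := fun T₁ T₂ =>
    ∃ g : Matrix (Fin (2*n+1)) (Fin (2*n+1)) ℝ,
      (∀ v w : Fin (2*n+1) → ℝ,
        splitBilin (g.mulVec v) (g.mulVec w) = splitBilin v w) ∧
      Matrix.det g = 1 ∧ g * T₁.val = T₂.val * g with hRel
  have hsa : ∀ T : S, (T.1)ᵀ * splitGram ℝ n = splitGram ℝ n * T.1 := by
    intro T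
    apply matrix_ext_of_dot
    intro v w
    rw [← dot_mulVec_left, ← dot_mulVec_right]
    exact T.2.1 v w
  have exP : ∀ T : S, ∃ s, ∃ P, valid n r T.1 P s := by
    intro T
    obtain ⟨P, s, h⟩ := exists_valid hr (hsa T) (by rw [T.2.2, hf])
    exact ⟨s, P, h⟩
  set Φ : S → Finset (Fin (2*n+1)) := fun T => (exP T).choose with hΦ
  have hΦspec : ∀ T : S, ∃ P, valid n r T.1 P (Φ T) := fun T => (exP T).choose_spec
  have hΦcard : ∀ T : S, (Φ T).card = n + 1 :=
    fun T => valid_card (hΦspec T).choose_spec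
  have hlift : ∀ T₁ T₂ : S, Rel T₁ T₂ → Φ T₁ = Φ T₂ := by
    rintro T₁ T₂ ⟨g, hgiso, hgdet, hgconj⟩
    obtain ⟨P₁, h1⟩ := hΦspec T₁
    obtain ⟨P₂, h2⟩ := hΦspec T₂
    have hgmat : gᵀ * splitGram ℝ n * g = splitGram ℝ n := by
      apply matrix_ext_of_dot
      intro v w
      rw [Matrix.mul_assoc, ← dot_mulVec_left, ← dot_mulVec_right]
      exact hgiso v w
    have hgu : IsUnit g.det := by rw [hgdet]; exact isUnit_one
    exact valid_unique hr (valid_transport hgmat hgu hgconj h1) h2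
  set Ψ : Quot Rel → {s : Finset (Fin (2*n+1)) // s.card = n + 1} :=
    Quot.lift (fun T => ⟨Φ T, hΦcard T⟩)
      (fun a b h => Subtype.ext (hlift a b h)) with hΨ
  have hsurj : Function.Surjective Ψ := by
    rintro ⟨s, hs⟩
    obtain ⟨T, P, hTsa, hTcp, hTval⟩ := exists_T r hs
    have hTbil : ∀ v w : Fin (2*n+1) → ℝ,
        splitBilin (T.mulVec v) w = splitBilin v (T.mulVec w) := by
      intro v w
      rw [splitBilin_eq, splitBilin_eq, dot_mulVec_left, dot_mulVec_right, hTsa]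
    set TS : S := ⟨T, hTbil, by rw [hTcp, hf]⟩ with hTS
    refine ⟨Quot.mk Rel TS, ?_⟩
    rw [hΨ]
    apply Subtype.ext
    show Φ TS = s
    exact valid_unique hr (hΦspec TS).choose_spec hTval
  have hinj : Function.Injective Ψ := by
    intro q₁ q₂
    induction q₁ using Quot.ind with
    | _ T₁ =>
    induction q₂ using Quot.ind with
    | _ T₂ =>
    intro heq
    rw [hΨ] at heq
    have hΦeq : Φ T₁ = Φ T₂ := congrArg Subtype.val heq
    obtain ⟨P₁, h1⟩ := hΦspec T₁
    obtain ⟨P₂, h2⟩ := hΦspec T₂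
    rw [← hΦeq] at h2
    obtain ⟨g, hgmat, hgdet, hgconj⟩ := valid_relate h1 h2
    apply Quot.sound
    refine ⟨g, ?_, hgdet, hgconj⟩
    intro v w
    rw [splitBilin_eq, splitBilin_eq, dot_mulVec_left, dot_mulVec_right, hgmat]
  rw [Nat.card_eq_of_bijective Ψ ⟨hinj, hsurj⟩, Nat.card_eq_fintype_card]
  rw [Fintype.card_finset_len, Fintype.card_fin]



end SplitOrbitsAux

end AuxSection

/-- Let `n ≥ 1`, let `W` be the split orthogonal space of dimension `2n+1` over `ℝ`, and
let `f ∈ ℝ[x]` be monic of degree `2n+1` with `2n+1` distinct roots, all real.  Then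
`SO(W)(ℝ)`, acting by conjugation on the self-adjoint endomorphisms of `W` with
characteristic polynomial `f`, has exactly `C(2n+1, n)` orbits. -/
theorem card_real_orbits_self_adjoint (n : ℕ) (hn : 1 ≤ n) (f : ℝ[X])
    (hroots : ∃ r : Fin (2 * n + 1) → ℝ, Function.Injective r ∧
      f = ∏ i : Fin (2 * n + 1), (X - C (r i))) :
    Nat.card (Quot fun T₁ T₂ : {T : Matrix (Fin (2 * n + 1)) (Fin (2 * n + 1)) ℝ //
          (∀ v w : Fin (2 * n + 1) → ℝ,
            splitBilin (T.mulVec v) w = splitBilin v (T.mulVec w)) ∧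
          Matrix.charpoly T = f} =>
        ∃ g : Matrix (Fin (2 * n + 1)) (Fin (2 * n + 1)) ℝ,
          (∀ v w : Fin (2 * n + 1) → ℝ,
            splitBilin (g.mulVec v) (g.mulVec w) = splitBilin v w) ∧
          Matrix.det g = 1 ∧ g * T₁.val = T₂.val * g) =
      Nat.choose (2 * n + 1) n := by
  obtain ⟨r, hr, hf⟩ := hroots
  have hchoose : Nat.choose (2 * n + 1) n = Nat.choose (2 * n + 1) (n + 1) := by
    have h1 : n + 1 ≤ 2 * n + 1 := by omega
    have h2 := Nat.choose_symm h1
    have h3 : 2 * n + 1 - (n + 1) = n := by omega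
    rw [h3] at h2
    exact h2
  rw [hchoose]
  exact SplitOrbitsAux.main_aux n r hr f hf
end

section
/- Let k be a field of characteristic ≠ 2, let n ≥ 1, let W be the split orthogonal space of dimension 2n+1 over k, let w ∈ W, and let T be a skew self-adjoint endomorphism of W (⟨Tv,v'⟩ = −⟨v,Tv'⟩ for all v,v'). Then: (i) the 2n+1 vectors w, T(w), T²(w), …, T^{2n}(w) form a basis of W if and only if the determinant of the (2n+1)×(2n+1) matrix with entries ⟨Tⁱ(w), Tʲ(w)⟩ (0 ≤ i,j ≤ 2n) is nonzero; and (ii) if these vectors form a basis, then the only linear automorphism g of W satisfying ⟨gv,gv'⟩ = ⟨v,v'⟩ for all v,v', g(w) = w, and g∘T = T∘g is the identity. -/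
lemma splitGram_eq_perm (k : Type*) [Field k] (n : ℕ) :
    splitGram k n = (Fin.revPerm : Equiv.Perm (Fin (2 * n + 1))).permMatrix k := by
  ext i j
  have hi := i.isLt
  have hj := j.isLt
  have key : ((i : ℕ) + (j : ℕ) = 2 * n) ↔ Fin.rev i = j := by
    rw [Fin.ext_iff, Fin.val_rev]
    omega
  simp only [splitGram, Matrix.of_apply, Equiv.Perm.permMatrix, PEquiv.toMatrix,
    Equiv.toPEquiv_apply, Option.mem_def, Option.some_inj, Fin.revPerm_apply, key]

lemma splitGram_det_ne_zero (k : Type*) [Field k] (n : ℕ) :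
    (splitGram k n).det ≠ 0 := by
  rw [splitGram_eq_perm, Matrix.det_permutation]
  rcases Int.units_eq_one_or (Equiv.Perm.sign (Fin.revPerm : Equiv.Perm (Fin (2 * n + 1))))
    with h | h <;> simp [h]

lemma gram_factor {k : Type*} [Field k] {m : ℕ} (A J : Matrix (Fin m) (Fin m) k) :
    (Matrix.of fun i j : Fin m => dotProduct (A i) (J.mulVec (A j)))
      = A * J * A.transpose := by
  ext i j
  simp only [Matrix.of_apply, Matrix.mul_apply, Matrix.mulVec,
    dotProduct, Matrix.transpose_apply, Finset.sum_mul, Finset.mul_sum, mul_assoc]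
  exact Finset.sum_comm

/-- Let `k` be a field of characteristic `≠ 2`, `n ≥ 1`, `W` the split orthogonal space of
dimension `2n+1` over `k`, `w ∈ W`, and `T` a skew self-adjoint endomorphism of `W`.
Then: (i) the vectors `w, T w, …, T^{2n} w` form a basis of `W` iff
`det(⟨Tⁱw, Tʲw⟩)_{0 ≤ i,j ≤ 2n} ≠ 0`; and (ii) if they form a basis, the only isometry `g`
of `W` fixing `w` and commuting with `T` is the identity. -/
theorem basis_iff_gram_det_ne_zero_and_trivial_stabilizer {k : Type*} [Field k]
    (hchar : (2 : k) ≠ 0) (n : ℕ) (hn : 1 ≤ n) (w : Fin (2 * n + 1) → k)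
    (T : Matrix (Fin (2 * n + 1)) (Fin (2 * n + 1)) k)
    (hskew : ∀ v v' : Fin (2 * n + 1) → k,
      splitBilin (T.mulVec v) v' = - splitBilin v (T.mulVec v')) :
    ((LinearIndependent k (fun i : Fin (2 * n + 1) => (T ^ (i : ℕ)).mulVec w) ∧
        Submodule.span k (Set.range fun i : Fin (2 * n + 1) => (T ^ (i : ℕ)).mulVec w) = ⊤) ↔
      Matrix.det (Matrix.of fun i j : Fin (2 * n + 1) =>
        splitBilin ((T ^ (i : ℕ)).mulVec w) ((T ^ (j : ℕ)).mulVec w)) ≠ 0) ∧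
    ((LinearIndependent k (fun i : Fin (2 * n + 1) => (T ^ (i : ℕ)).mulVec w) ∧
        Submodule.span k (Set.range fun i : Fin (2 * n + 1) => (T ^ (i : ℕ)).mulVec w) = ⊤) →
      ∀ g : Matrix (Fin (2 * n + 1)) (Fin (2 * n + 1)) k,
        (∀ v v' : Fin (2 * n + 1) → k,
          splitBilin (g.mulVec v) (g.mulVec v') = splitBilin v v') →
        g.mulVec w = w → g * T = T * g → g = 1) := by
  set A : Matrix (Fin (2 * n + 1)) (Fin (2 * n + 1)) k := Matrix.of fun i j => (T ^ (i : ℕ)).mulVec w j with hA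
  have hrow : ∀ i : Fin (2 * n + 1), A i = (T ^ (i : ℕ)).mulVec w := fun i => rfl
  -- Gram matrix factorization
  have hGram : (Matrix.of fun i j : Fin (2 * n + 1) =>
      splitBilin ((T ^ (i : ℕ)).mulVec w) ((T ^ (j : ℕ)).mulVec w))
      = A * splitGram k n * A.transpose := gram_factor A (splitGram k n)
  have hdet : (Matrix.of fun i j : Fin (2 * n + 1) =>
      splitBilin ((T ^ (i : ℕ)).mulVec w) ((T ^ (j : ℕ)).mulVec w)).det
      = A.det * (splitGram k n).det * A.det := by
    rw [hGram, Matrix.det_mul, Matrix.det_mul, Matrix.det_transpose]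
  have hLI : LinearIndependent k (fun i : Fin (2 * n + 1) => (T ^ (i : ℕ)).mulVec w) ↔ A.det ≠ 0 := by
    rw [show (fun i : Fin (2 * n + 1) => (T ^ (i : ℕ)).mulVec w) = A.row from rfl,
      Matrix.linearIndependent_rows_iff_isUnit, Matrix.isUnit_iff_isUnit_det, isUnit_iff_ne_zero]
  have hspan : LinearIndependent k (fun i : Fin (2 * n + 1) => (T ^ (i : ℕ)).mulVec w) →
      Submodule.span k (Set.range fun i : Fin (2 * n + 1) => (T ^ (i : ℕ)).mulVec w) = ⊤ := by
    intro h
    exact h.span_eq_top_of_card_eq_finrank (by simp [Module.finrank_fin_fun])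
  constructor
  · constructor
    · rintro ⟨h1, -⟩
      rw [hdet]
      have hA0 := hLI.mp h1
      exact mul_ne_zero (mul_ne_zero hA0 (splitGram_det_ne_zero k n)) hA0
    · intro h
      have hA0 : A.det ≠ 0 := by
        intro h0
        rw [hdet, h0, zero_mul, zero_mul] at h
        exact h rfl
      have h1 := hLI.mpr hA0
      exact ⟨h1, hspan h1⟩
  · rintro ⟨h1, h2⟩ g hiso hgw hgT
    have hcomm : ∀ i : ℕ, g * T ^ i = T ^ i * g := by
      intro i
      induction i with
      | zero => simp
      | succ i ih => rw [pow_succ, ← mul_assoc, ih, mul_assoc, hgT, ← mul_assoc]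
    have hfix : ∀ i : Fin (2 * n + 1), g.mulVec ((T ^ (i : ℕ)).mulVec w) = (T ^ (i : ℕ)).mulVec w := by
      intro i
      rw [Matrix.mulVec_mulVec, hcomm, ← Matrix.mulVec_mulVec, hgw]
    have hall : ∀ v : Fin (2 * n + 1) → k, g.mulVec v = v := by
      have : ∀ v ∈ Submodule.span k (Set.range fun i : Fin (2 * n + 1) => (T ^ (i : ℕ)).mulVec w),
          g.mulVecLin v = v := by
        intro v hv
        induction hv using Submodule.span_induction with
        | mem x hx => obtain ⟨i, rfl⟩ := hx; exact hfix i
        | zero => simp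
        | add x y _ _ hx hy => rw [map_add, hx, hy]
        | smul c x _ hx => rw [map_smul, hx]
      intro v
      exact this v (by rw [h2]; trivial)
    ext i j
    have := congrFun (hall (Pi.single j 1)) i
    simpa [Matrix.mulVec_single, Matrix.one_apply, Pi.single_apply] using this
end
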